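/- Cell-sum identity (equation (2) of the paper): Let m ≥ 1, fix a word a ∈ (Fin n)^{m−1}, and suppose u : ℝ^{n−1} → ℝ is an eigenfunction of Δ_m with eigenvalue λ. Then (2 − λ) · ∑_{unordered pairs {r,s}, r ≠ s} u(x_{r,s}) = (n − 1) · ∑_{j<n} u(x_{j,j}). -/

import Mathlib

open Finset

noncomputable section

/-- Ambient Euclidean space `ℝ^{n-1}`. -/
abbrev Amb (n : ℕ) := EuclideanSpace ℝ (Fin (n - 1))

/-- The contraction `f_i(x) = (x + x_i)/2`. -/
def fmap {n : ℕ} (pts : Fin n → Amb n) (i : Fin n) (x : Amb n) : Amb n :=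
  (2 : ℝ)⁻¹ • (x + pts i)

/-- Composition of contractions along a list (first entry applied last... actually first). -/
def fList {n : ℕ} (pts : Fin n → Amb n) : List (Fin n) → Amb n → Amb n
  | [] => id
  | i :: t => fmap pts i ∘ fList pts t

/-- The `m`-contraction `f_w = f_{w_0} ∘ ⋯ ∘ f_{w_{m-1}}`. -/
def fWord {n m : ℕ} (pts : Fin n → Amb n) (w : Fin m → Fin n) : Amb n → Amb n :=
  fList pts (List.ofFn w)

/-- The vertex set `V_m = ⋃_w f_w(V_0)`, where `V_0 = {x_0, …, x_{n-1}}`. -/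
def V {n : ℕ} (pts : Fin n → Amb n) (m : ℕ) : Set (Amb n) :=
  ⋃ w : Fin m → Fin n, fWord pts w '' Set.range pts

/-- Adjacency in the graph `Γ_m`. -/
def Adj {n : ℕ} (pts : Fin n → Amb n) (m : ℕ) (x y : Amb n) : Prop :=
  x ≠ y ∧ ∃ w : Fin m → Fin n,
    x ∈ fWord pts w '' Set.range pts ∧ y ∈ fWord pts w '' Set.range pts

/-- The graph Laplacian `Δ_m u (x) = ∑_{y ~ x} (u(x) - u(y))`. -/
def lap {n : ℕ} (pts : Fin n → Amb n) (m : ℕ) (u : Amb n → ℝ) (x : Amb n) : ℝ :=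
  ∑ᶠ y ∈ {y | Adj pts m x y}, (u x - u y)

/-- `u` is an eigenfunction of `Δ_m` with eigenvalue `lam`:
`Δ_m u (x) = lam * u x` for all `x ∈ V_m \ V_0`. -/
def IsEigen {n : ℕ} (pts : Fin n → Amb n) (m : ℕ) (u : Amb n → ℝ) (lam : ℝ) : Prop :=
  ∀ x ∈ V pts m \ V pts 0, lap pts m u x = lam * u x

/-- The point `x_{r,s} = f_a((x_r + x_s)/2)` for a word `a` of length `m-1`. -/
def xpt {n m : ℕ} (pts : Fin n → Amb n) (a : Fin m → Fin n) (r s : Fin n) : Amb n :=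
  fWord pts a ((2 : ℝ)⁻¹ • (pts r + pts s))

/-- The graph energy `E_m(u) = ∑_{x ~ y} (u(x) - u(y))²`, summed over unordered
adjacent pairs (each ordered pair counted once, then halved). -/
def energy {n : ℕ} (pts : Fin n → Amb n) (m : ℕ) (u : Amb n → ℝ) : ℝ :=
  (2 : ℝ)⁻¹ * ∑ᶠ p ∈ {p : Amb n × Amb n | Adj pts m p.1 p.2}, (u p.1 - u p.2) ^ 2


namespace CellSumAux

variable {n : ℕ}

def e (p : Fin n) : Fin n → ℝ := fun j => if p = j then 1 else 0

lemma e_sum (p : Fin n) : ∑ j, e p j = 1 := by simp [e]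

lemma e_nonneg (p j : Fin n) : 0 ≤ e p j := by unfold e; split <;> norm_num

lemma e_inj {t t' : Fin n} (h : e t = e t') : t = t' := by
  have h1 := congrFun h t
  simp only [e, if_pos rfl] at h1
  by_contra hne
  rw [if_neg (Ne.symm hne)] at h1
  norm_num at h1

def mrs (r s : Fin n) : Fin n → ℝ := fun j => (e r j + e s j) / 2

lemma mrs_sum (r s : Fin n) : ∑ j, mrs r s j = 1 := by
  unfold mrs
  rw [← Finset.sum_div, Finset.sum_add_distrib, e_sum, e_sum]
  norm_num

lemma mrs_nonneg (r s j : Fin n) : 0 ≤ mrs r s j := by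
  have := e_nonneg r j; have := e_nonneg s j
  unfold mrs; positivity

lemma mrs_lt_one {r s : Fin n} (hrs : r ≠ s) (j : Fin n) : mrs r s j < 1 := by
  unfold mrs e
  by_cases h1 : r = j <;> by_cases h2 : s = j
  · exact absurd (h1.trans h2.symm) hrs
  all_goals norm_num [h1, h2]

def Wl : List (Fin n) → (Fin n → ℝ) → Fin n → ℝ
  | [], μ => μ
  | i :: t, μ => fun j => (Wl t μ j + e i j) / 2

lemma Wl_sum (w : List (Fin n)) (μ : Fin n → ℝ) (h : ∑ j, μ j = 1) :
    ∑ j, Wl w μ j = 1 := by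
  induction w with
  | nil => exact h
  | cons i t ih =>
    show ∑ j, (Wl t μ j + e i j) / 2 = 1
    rw [← Finset.sum_div, Finset.sum_add_distrib, ih, e_sum]
    norm_num

lemma Wl_nonneg (w : List (Fin n)) (μ : Fin n → ℝ) (h : ∀ j, 0 ≤ μ j) (j : Fin n) :
    0 ≤ Wl w μ j := by
  induction w with
  | nil => exact h j
  | cons i t ih =>
    show 0 ≤ (Wl t μ j + e i j) / 2
    have := e_nonneg i j; positivity

lemma Wl_lt_one (w : List (Fin n)) (μ : Fin n → ℝ) (h : ∀ j, μ j < 1) (j : Fin n) :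
    Wl w μ j < 1 := by
  induction w with
  | nil => exact h j
  | cons i t ih =>
    show (Wl t μ j + e i j) / 2 < 1
    have h2 : e i j ≤ 1 := by unfold e; split <;> norm_num
    linarith

lemma Wl_append (l l' : List (Fin n)) (μ : Fin n → ℝ) :
    Wl (l ++ l') μ = Wl l (Wl l' μ) := by
  induction l with
  | nil => rfl
  | cons i t ih => show (fun j => (Wl (t ++ l') μ j + e i j) / 2) = _; rw [ih]; rfl

lemma Wl_inj (w : List (Fin n)) {μ ν : Fin n → ℝ} (h : Wl w μ = Wl w ν) : μ = ν := by
  induction w with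
  | nil => exact h
  | cons i t ih =>
    apply ih
    funext j
    have h1 := congrFun h j
    simp only [Wl] at h1
    linarith

lemma pair_eq {p w r s : Fin n} (hrs : r ≠ s)
    (h : ∀ j, e p j + e w j = e r j + e s j) :
    (w = r ∧ p = s) ∨ (w = s ∧ p = r) := by
  have hr := h r
  have hs := h s
  by_cases hpr : p = r
  · subst hpr
    right
    refine ⟨?_, rfl⟩
    by_contra hws
    simp [e, hrs, hws] at hs
  · have hw : w = r := by
      by_contra hwr
      simp [e, hpr, hwr, Ne.symm hrs] at hr
    subst hw
    left
    refine ⟨rfl, ?_⟩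
    by_contra hps
    simp [e, hps, hrs] at hs

lemma classify {r s : Fin n} (hrs : r ≠ s) :
    ∀ (l' l : List (Fin n)), l.length = l'.length + 1 → ∀ p : Fin n,
      Wl l (e p) = Wl l' (mrs r s) →
      (l = l' ++ [r] ∧ p = s) ∨ (l = l' ++ [s] ∧ p = r) := by
  intro l'
  induction l' with
  | nil =>
    intro l hl p h
    obtain ⟨w0, t, rfl⟩ : ∃ w0 t, l = w0 :: t := by
      cases l with
      | nil => simp at hl
      | cons a b => exact ⟨a, b, rfl⟩
    obtain rfl : t = [] := by simpa using hl
    have h2 : ∀ j, e p j + e w0 j = e r j + e s j := by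
      intro j
      have := congrFun h j
      simp only [Wl, mrs] at this
      linarith
    rcases pair_eq hrs h2 with ⟨h1, h2'⟩ | ⟨h1, h2'⟩
    · exact Or.inl ⟨by rw [h1]; rfl, h2'⟩
    · exact Or.inr ⟨by rw [h1]; rfl, h2'⟩
  | cons a0 a'' ih =>
    intro l hl p h
    obtain ⟨w0, w'', rfl⟩ : ∃ w0 t, l = w0 :: t := by
      cases l with
      | nil => simp at hl
      | cons a b => exact ⟨a, b, rfl⟩
    have hl' : w''.length = a''.length + 1 := by simpa using hl
    have key : ∀ j, Wl w'' (e p) j + e w0 j = Wl a'' (mrs r s) j + e a0 j := by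
      intro j
      have := congrFun h j
      simp only [Wl] at this
      linarith
    by_cases hw : w0 = a0
    · subst hw
      have heq : Wl w'' (e p) = Wl a'' (mrs r s) := by
        funext j; have := key j; linarith
      rcases ih w'' hl' p heq with ⟨h1, h2⟩ | ⟨h1, h2⟩
      · exact Or.inl ⟨by rw [h1]; rfl, h2⟩
      · exact Or.inr ⟨by rw [h1]; rfl, h2⟩
    · exfalso
      have h1 := key w0
      have hb : Wl a'' (mrs r s) w0 < 1 := Wl_lt_one _ _ (mrs_lt_one hrs) w0
      have hge : 0 ≤ Wl w'' (e p) w0 := Wl_nonneg _ _ (e_nonneg p) w0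
      simp [e, hw, Ne.symm hw] at h1
      linarith



lemma fList_eq_sum (pts : Fin n → Amb n) :
    ∀ (w : List (Fin n)) (μ : Fin n → ℝ),
      fList pts w (∑ j, μ j • pts j) = ∑ j, Wl w μ j • pts j
  | [], μ => rfl
  | i :: t, μ => by
    show fmap pts i (fList pts t (∑ j, μ j • pts j)) = _
    rw [fList_eq_sum pts t μ, fmap]
    have hp : pts i = ∑ j, e i j • pts j := by
      simp [e, ite_smul, Finset.sum_ite_eq]
    rw [hp, ← Finset.sum_add_distrib, Finset.smul_sum]
    refine Finset.sum_congr rfl fun j _ => ?_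
    simp only [Wl]
    rw [← add_smul, smul_smul, div_eq_inv_mul]

lemma coeff_unique (pts : Fin n → Amb n) (hpts : AffineIndependent ℝ pts)
    {c d : Fin n → ℝ} (hc : ∑ j, c j = 1) (hd : ∑ j, d j = 1)
    (h : ∑ j, c j • pts j = ∑ j, d j • pts j) : c = d := by
  have hsum : ∑ j, (c - d) j = 0 := by
    simp only [Pi.sub_apply]
    rw [Finset.sum_sub_distrib, hc, hd, sub_self]
  have hv : Finset.univ.weightedVSub pts (c - d) = 0 := by
    rw [Finset.weightedVSub_eq_linear_combination _ hsum]
    simp only [Pi.sub_apply, sub_smul]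
    rw [Finset.sum_sub_distrib, h, sub_self]
  have hz := hpts Finset.univ (c - d) hsum hv
  funext j
  have := hz j (Finset.mem_univ j)
  have : c j - d j = 0 := this
  linarith

lemma pts_eq_sum (pts : Fin n → Amb n) (p : Fin n) : pts p = ∑ j, e p j • pts j := by
  simp [e, ite_smul, Finset.sum_ite_eq]

lemma mid_eq_sum (pts : Fin n → Amb n) (r s : Fin n) :
    (2:ℝ)⁻¹ • (pts r + pts s) = ∑ j, mrs r s j • pts j := by
  rw [pts_eq_sum pts r, pts_eq_sum pts s, ← Finset.sum_add_distrib, Finset.smul_sum]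
  refine Finset.sum_congr rfl fun j _ => ?_
  simp only [mrs]
  rw [← add_smul, smul_smul, div_eq_inv_mul]

lemma xpt_eq_sum (pts : Fin n → Amb n) {k : ℕ} (a : Fin k → Fin n) (r s : Fin n) :
    xpt pts a r s = ∑ j, Wl (List.ofFn a) (mrs r s) j • pts j := by
  rw [xpt, fWord, mid_eq_sum, fList_eq_sum]

lemma fWord_pts_eq_sum (pts : Fin n → Amb n) {m : ℕ} (w : Fin m → Fin n) (p : Fin n) :
    fWord pts w (pts p) = ∑ j, Wl (List.ofFn w) (e p) j • pts j := by
  rw [fWord, pts_eq_sum pts p, fList_eq_sum]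

lemma fList_append (pts : Fin n → Amb n) :
    ∀ (l l' : List (Fin n)) (x : Amb n),
      fList pts (l ++ l') x = fList pts l (fList pts l' x)
  | [], l', x => rfl
  | i :: t, l', x => by
    show fmap pts i (fList pts (t ++ l') x) = fmap pts i (fList pts t (fList pts l' x))
    rw [fList_append pts t l' x]

lemma ofFn_snoc {k : ℕ} (a : Fin k → Fin n) (r : Fin n) :
    List.ofFn (Fin.snoc a r : Fin (k+1) → Fin n) = List.ofFn a ++ [r] := by
  rw [List.ofFn_succ']
  simp [Fin.snoc_castSucc, Fin.snoc_last]

lemma cell_apply (pts : Fin n → Amb n) {k : ℕ} {w : Fin (k+1) → Fin n}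
    {a : Fin k → Fin n} {r : Fin n} (h : List.ofFn w = List.ofFn a ++ [r]) (q : Fin n) :
    fWord pts w (pts q) = xpt pts a r q := by
  rw [fWord, h, fList_append, xpt, fWord]
  have h2 : fList pts [r] (pts q) = (2:ℝ)⁻¹ • (pts r + pts q) := by
    simp only [fList, Function.comp, id, fmap, add_comm]
  rw [h2]

lemma xpt_symm (pts : Fin n → Amb n) {k : ℕ} (a : Fin k → Fin n) (r s : Fin n) :
    xpt pts a r s = xpt pts a s r := by
  rw [xpt, xpt, add_comm]

lemma xpt_eq_mrs (pts : Fin n → Amb n) (hpts : AffineIndependent ℝ pts)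
    {k : ℕ} (a : Fin k → Fin n) {p q p' q' : Fin n}
    (h : xpt pts a p q = xpt pts a p' q') : mrs p q = mrs p' q' := by
  apply Wl_inj (List.ofFn a)
  apply coeff_unique pts hpts (Wl_sum _ _ (mrs_sum p q)) (Wl_sum _ _ (mrs_sum p' q'))
  rw [← xpt_eq_sum, ← xpt_eq_sum]
  exact h

lemma mrs_right_inj {r t t' : Fin n} (h : mrs r t = mrs r t') : t = t' := by
  apply e_inj
  funext j
  have := congrFun h j
  simp only [mrs] at this
  linarith

lemma mrs_cross {r s t t' : Fin n} (hrs : r ≠ s) (h : mrs r t = mrs s t') :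
    t = s ∧ t' = r := by
  have hj : ∀ j, e t j + e r j = e s j + e t' j := by
    intro j
    have := congrFun h j
    simp only [mrs] at this
    linarith
  by_cases hst : s = t'
  · exfalso
    subst hst
    have h1 := hj r
    have hsr : ¬ (s = r) := fun hh => hrs hh.symm
    have h0 := e_nonneg t r
    simp only [e, if_pos rfl, if_neg hsr] at h1 h0
    split_ifs at h1 <;> linarith
  · rcases pair_eq hst hj with ⟨h1, h2⟩ | ⟨h1, h2⟩
    · exact absurd h1 hrs
    · exact ⟨h2, h1.symm⟩



lemma eigen_step (pts : Fin n → Amb n) (hpts : AffineIndependent ℝ pts)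
    {k : ℕ} (a : Fin k → Fin n) (lam : ℝ) (u : Amb n → ℝ)
    (hu : IsEigen pts (k+1) u lam) {r s : Fin n} (hrs : r ≠ s) :
    ((∑ t ∈ Finset.univ.erase s, (u (xpt pts a r s) - u (xpt pts a r t)))
      + ∑ t ∈ Finset.univ.erase r, (u (xpt pts a r s) - u (xpt pts a s t)))
    = lam * u (xpt pts a r s) := by
  classical
  set x := xpt pts a r s with hx
  have hxmem : ∀ (w : Fin (k+1) → Fin n) (p : Fin n), fWord pts w (pts p) = x →
      (List.ofFn w = List.ofFn a ++ [r] ∧ p = s) ∨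
        (List.ofFn w = List.ofFn a ++ [s] ∧ p = r) := by
    intro w p hw
    have hcoef : Wl (List.ofFn w) (e p) = Wl (List.ofFn a) (mrs r s) := by
      apply coeff_unique pts hpts (Wl_sum _ _ (e_sum p)) (Wl_sum _ _ (mrs_sum r s))
      rw [← fWord_pts_eq_sum, ← xpt_eq_sum]
      exact hw
    exact classify hrs (List.ofFn a) (List.ofFn w) (by simp) p hcoef
  have hxr : fWord pts (Fin.snoc a r : Fin (k+1) → Fin n) (pts s) = x :=
    cell_apply pts (ofFn_snoc a r) s
  have hxs : fWord pts (Fin.snoc a s : Fin (k+1) → Fin n) (pts r) = x := by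
    rw [cell_apply pts (ofFn_snoc a s) r, hx, xpt_symm]
  have hxV : x ∈ V pts (k+1) :=
    Set.mem_iUnion.2 ⟨Fin.snoc a r, ⟨pts s, ⟨s, rfl⟩, hxr⟩⟩
  have hxV0 : x ∉ V pts 0 := by
    intro hmem
    rcases Set.mem_iUnion.1 hmem with ⟨w, z, ⟨j, rfl⟩, hz⟩
    have hw0 : fWord pts w (pts j) = pts j := by
      rw [fWord, show List.ofFn w = [] from List.ofFn_zero]
      rfl
    rw [hw0] at hz
    have hj : e j = Wl (List.ofFn a) (mrs r s) := by
      apply coeff_unique pts hpts (e_sum j) (Wl_sum _ _ (mrs_sum r s))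
      rw [← pts_eq_sum, ← xpt_eq_sum]
      exact hz
    have hlt := Wl_lt_one (List.ofFn a) _ (mrs_lt_one hrs) j
    rw [← hj] at hlt
    simp [e] at hlt
  set Sr := (Finset.univ.erase s).image (fun t => xpt pts a r t) with hSr
  set Ss := (Finset.univ.erase r).image (fun t => xpt pts a s t) with hSs
  have hinjr : ∀ t t', xpt pts a r t = xpt pts a r t' → t = t' :=
    fun t t' h => mrs_right_inj (xpt_eq_mrs pts hpts a h)
  have hinjs : ∀ t t', xpt pts a s t = xpt pts a s t' → t = t' :=
    fun t t' h => mrs_right_inj (xpt_eq_mrs pts hpts a h)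
  have hcross : ∀ t t', t ≠ s → xpt pts a r t ≠ xpt pts a s t' := by
    intro t t' ht h
    exact ht (mrs_cross hrs (xpt_eq_mrs pts hpts a h)).1
  have hdisj : Disjoint Sr Ss := by
    rw [Finset.disjoint_left]
    rintro y hy1 hy2
    obtain ⟨t, ht, rfl⟩ := Finset.mem_image.1 hy1
    obtain ⟨t', ht', hteq⟩ := Finset.mem_image.1 hy2
    exact hcross t t' (Finset.ne_of_mem_erase ht) hteq.symm
  have hset : {y | Adj pts (k+1) x y} = ↑(Sr ∪ Ss) := by
    ext y
    simp only [Set.mem_setOf_eq, Finset.coe_union, Set.mem_union, Finset.mem_coe,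
      Finset.mem_union]
    constructor
    · rintro ⟨hne, w, ⟨z, ⟨p, rfl⟩, hw⟩, ⟨z', ⟨q, rfl⟩, rfl⟩⟩
      rcases hxmem w p hw with ⟨h1, -⟩ | ⟨h1, -⟩
      · left
        rw [cell_apply pts h1 q]
        refine Finset.mem_image.2 ⟨q, Finset.mem_erase.2 ⟨?_, Finset.mem_univ q⟩, rfl⟩
        rintro rfl
        exact hne (by rw [cell_apply pts h1 q, ← hx])
      · right
        rw [cell_apply pts h1 q]
        refine Finset.mem_image.2 ⟨q, Finset.mem_erase.2 ⟨?_, Finset.mem_univ q⟩, rfl⟩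
        rintro rfl
        exact hne (by rw [cell_apply pts h1 q, hx, xpt_symm])
    · rintro (hy | hy)
      · obtain ⟨t, ht, rfl⟩ := Finset.mem_image.1 hy
        have hts := Finset.ne_of_mem_erase ht
        refine ⟨fun h => hts (hinjr t s (h.symm.trans hx)), Fin.snoc a r,
          ⟨pts s, ⟨s, rfl⟩, hxr⟩, ⟨pts t, ⟨t, rfl⟩, cell_apply pts (ofFn_snoc a r) t⟩⟩
      · obtain ⟨t, ht, rfl⟩ := Finset.mem_image.1 hy
        have htr := Finset.ne_of_mem_erase ht
        refine ⟨fun h => htr (hinjs t r (h.symm.trans (hx.trans (xpt_symm pts a r s)))), Fin.snoc a s,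
          ⟨pts r, ⟨r, rfl⟩, hxs⟩, ⟨pts t, ⟨t, rfl⟩, cell_apply pts (ofFn_snoc a s) t⟩⟩
  have hlap := hu x ⟨hxV, hxV0⟩
  rw [lap, hset, finsum_mem_coe_finset, Finset.sum_union hdisj, hSr, hSs,
    Finset.sum_image (fun t _ t' _ h => hinjr t t' h),
    Finset.sum_image (fun t _ t' _ h => hinjs t t' h)] at hlap
  exact hlap

end CellSumAux

open CellSumAux

/-- Cell-sum identity (equation (2)). -/
theorem cell_sum_identity
    (n : ℕ) (hn : 2 ≤ n) (pts : Fin n → Amb n) (hpts : AffineIndependent ℝ pts)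
    (m : ℕ) (hm : 1 ≤ m) (a : Fin (m - 1) → Fin n) (lam : ℝ)
    (u : Amb n → ℝ) (hu : IsEigen pts m u lam) :
    (2 - lam) * (∑ r : Fin n, ∑ s ∈ Finset.univ.filter (fun s => r < s), u (xpt pts a r s)) =
      ((n : ℝ) - 1) * ∑ j : Fin n, u (xpt pts a j j) := by
  classical
  obtain ⟨k, rfl⟩ : ∃ k, m = k + 1 := ⟨m - 1, (Nat.succ_pred_eq_of_pos hm).symm⟩
  let g : Fin n → Fin n → ℝ := fun p q => u (xpt pts a p q)
  let G : Fin n → ℝ := fun p => ∑ t, g p t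
  let T : ℝ := ∑ j, g j j
  let SG : ℝ := ∑ p, G p
  let S : ℝ := ∑ r, ∑ s ∈ Finset.univ.filter (fun s => r < s), g r s
  show (2 - lam) * S = ((n : ℝ) - 1) * T
  have hgsymm : ∀ p q, g p q = g q p := fun p q => congrArg u (xpt_symm pts a p q)
  -- the local eigenvalue equation, with full sums
  have clean : ∀ r s : Fin n, r ≠ s →
      (∑ t, (g r s - g r t)) + (∑ t, (g r s - g s t)) = lam * g r s := by
    intro r s hrs
    have h0 := eigen_step pts hpts a lam u hu hrs
    have e1 : (∑ t ∈ Finset.univ.erase s, (g r s - g r t)) = ∑ t, (g r s - g r t) :=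
      Finset.sum_erase Finset.univ (sub_self (g r s))
    have e2 : (∑ t ∈ Finset.univ.erase r, (g r s - g s t)) = ∑ t, (g r s - g s t) :=
      Finset.sum_erase Finset.univ (by rw [hgsymm r s]; exact sub_self (g s r))
    rw [← e1, ← e2]
    exact h0
  have clean2 : ∀ r s : Fin n, r ≠ s →
      ((n : ℝ) * g r s - G r) + ((n : ℝ) * g r s - G s) = lam * g r s := by
    intro r s hrs
    have h0 := clean r s hrs
    rw [Finset.sum_sub_distrib, Finset.sum_sub_distrib, Finset.sum_const, Finset.card_univ,
      Fintype.card_fin, nsmul_eq_mul] at h0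
    exact h0
  -- sum the eigenvalue equation over all ordered pairs r ≠ s
  have hE0 : ∑ r, ∑ s ∈ Finset.univ.erase r, (((n : ℝ) * g r s - G r) + ((n : ℝ) * g r s - G s))
      = ∑ r, ∑ s ∈ Finset.univ.erase r, lam * g r s :=
    Finset.sum_congr rfl fun r _ => Finset.sum_congr rfl fun s hs =>
      clean2 r s (Ne.symm (Finset.ne_of_mem_erase hs))
  have hA : ∑ r, ∑ s ∈ Finset.univ.erase r, g r s = SG - T := by
    rw [Finset.sum_congr rfl fun r _ =>
      (Finset.sum_erase_eq_sub (f := g r) (Finset.mem_univ r)), Finset.sum_sub_distrib]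
  have hRHS : ∑ r, ∑ s ∈ Finset.univ.erase r, lam * g r s = lam * (SG - T) := by
    simp only [← Finset.mul_sum]
    rw [hA]
  have hinner : ∀ r : Fin n, ∑ s ∈ Finset.univ.erase r,
      (((n : ℝ) * g r s - G r) + ((n : ℝ) * g r s - G s))
      = (2 * (n : ℝ)) * (G r - g r r) - ((n : ℝ) * G r - G r) - (SG - G r) := by
    intro r
    have h1 : ∑ s ∈ Finset.univ.erase r, g r s = G r - g r r :=
      Finset.sum_erase_eq_sub (f := g r) (Finset.mem_univ r)
    have h2 : ∑ s ∈ Finset.univ.erase r, G s = SG - G r :=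
      Finset.sum_erase_eq_sub (f := G) (Finset.mem_univ r)
    have h3 : ∑ _s ∈ Finset.univ.erase r, G r = (n : ℝ) * G r - G r := by
      rw [Finset.sum_erase_eq_sub (f := fun _ => G r) (Finset.mem_univ r),
        Finset.sum_const, Finset.card_univ, Fintype.card_fin, nsmul_eq_mul]
    calc ∑ s ∈ Finset.univ.erase r, (((n : ℝ) * g r s - G r) + ((n : ℝ) * g r s - G s))
        = ∑ s ∈ Finset.univ.erase r, ((2 * (n : ℝ)) * g r s - G r - G s) :=
          Finset.sum_congr rfl fun s _ => by ring
      _ = (∑ s ∈ Finset.univ.erase r, (2 * (n : ℝ)) * g r s)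
            - (∑ _s ∈ Finset.univ.erase r, G r) - (∑ s ∈ Finset.univ.erase r, G s) := by
          rw [Finset.sum_sub_distrib, Finset.sum_sub_distrib]
      _ = (2 * (n : ℝ)) * (G r - g r r) - ((n : ℝ) * G r - G r) - (SG - G r) := by
          rw [← Finset.mul_sum, h1, h2, h3]
  have hE1 : (2 * (n : ℝ)) * (SG - T) - ((n : ℝ) * SG - SG) - ((n : ℝ) * SG - SG)
      = lam * (SG - T) := by
    rw [← hRHS, ← hE0, Finset.sum_congr rfl fun r _ => hinner r]
    have hsum1 : ∑ r, (G r - g r r) = SG - T := Finset.sum_sub_distrib _ _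
    have hsum2 : ∑ r, ((n : ℝ) * G r - G r) = (n : ℝ) * SG - SG := by
      rw [Finset.sum_sub_distrib, ← Finset.mul_sum]
    have hsum3 : ∑ r : Fin n, (SG - G r) = (n : ℝ) * SG - SG := by
      rw [Finset.sum_sub_distrib, Finset.sum_const, Finset.card_univ, Fintype.card_fin,
        nsmul_eq_mul]
    rw [Finset.sum_sub_distrib, Finset.sum_sub_distrib, ← Finset.mul_sum, hsum1, hsum2, hsum3]
  -- the unordered pair sum
  have hsplit : ∀ r : Fin n, Finset.univ.erase r
      = Finset.univ.filter (fun s => r < s) ∪ Finset.univ.filter (fun s => s < r) := by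
    intro r
    ext x
    simp only [Finset.mem_erase, Finset.mem_union, Finset.mem_filter, Finset.mem_univ,
      true_and, and_true, Fin.ext_iff, Fin.lt_def, ne_eq]
    omega
  have hd : ∀ r : Fin n, Disjoint (Finset.univ.filter (fun s => r < s))
      (Finset.univ.filter (fun s => s < r)) := by
    intro r
    rw [Finset.disjoint_left]
    intro x h1 h2
    simp only [Finset.mem_filter] at h1 h2
    exact absurd h2.2 (lt_asymm h1.2)
  have hswap : ∑ r, ∑ s ∈ Finset.univ.filter (fun s => s < r), g r s = S := by
    rw [Finset.sum_comm' (t' := (Finset.univ : Finset (Fin n)))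
      (s' := fun y => Finset.univ.filter (fun x => y < x))
      (by intro x y; simp only [Finset.mem_univ, Finset.mem_filter, true_and, and_true])]
    exact Finset.sum_congr rfl fun y _ => Finset.sum_congr rfl fun x _ => hgsymm x y
  have hA2 : SG - T = 2 * S := by
    rw [← hA, Finset.sum_congr rfl fun r _ => by
        rw [hsplit r, Finset.sum_union (hd r)], Finset.sum_add_distrib, hswap]
    ring
  linear_combination hE1 / 2 + (lam / 2 - 1) * hA2
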